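/- Let Ω ⊆ ℝ^N be a bounded open set and let m : Ω → ℝ be measurable, bounded, and nonnegative. Then there exists λ > 0 such that for every measurable u : ℝ^N → ℝ with u = 0 almost everywhere on ℝ^N ∖ Ω one has λ ∫_Ω m(x) |u(x)|^p dx ≤ [u]_{s,p}^p = ∬_{ℝ^N×ℝ^N} |u(x)−u(y)|^p / |x−y|^{N+ps} dx dy. (Positivity of the first weighted eigenvalue λ₁(m) of the fractional p-Laplacian; a fractional Poincaré inequality.) -/

import Mathlib

open MeasureTheory Set

/-- Positivity of the first weighted eigenvalue `λ₁(m)` of the fractional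
`p`-Laplacian (a fractional Poincaré inequality): for a bounded open `Ω` and a bounded,
nonnegative, measurable weight `m`, there is `λ > 0` such that for every measurable `u`
vanishing a.e. outside `Ω`,
`λ ∫_Ω m |u|^p ≤ ∬ |u(x)-u(y)|^p / ‖x-y‖^(N+ps) dx dy`. -/
theorem statement18 {N : ℕ} (hN : 1 ≤ N) {p s : ℝ} (hp : 2 ≤ p)
    (hs : s ∈ Set.Ioo (0 : ℝ) 1) (hNps : p * s < (N : ℝ))
    (Ω : Set (EuclideanSpace ℝ (Fin N)))
    (hΩo : IsOpen Ω) (hΩb : Bornology.IsBounded Ω)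
    (m : EuclideanSpace ℝ (Fin N) → ℝ) (hm : Measurable m)
    (hmb : ∃ M : ℝ, ∀ x ∈ Ω, m x ≤ M) (hm0 : ∀ x ∈ Ω, 0 ≤ m x) :
    ∃ lam : ℝ, 0 < lam ∧
      ∀ u : EuclideanSpace ℝ (Fin N) → ℝ, Measurable u → (∀ᵐ x, x ∉ Ω → u x = 0) →
        ENNReal.ofReal lam * ∫⁻ x in Ω, ENNReal.ofReal (m x * |u x| ^ p) ≤
          ∫⁻ x, ∫⁻ y,
            ENNReal.ofReal (|u x - u y| ^ p / ‖x - y‖ ^ ((N : ℝ) + p * s)) := by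
  obtain ⟨M, hM⟩ := hmb
  obtain ⟨r, hr⟩ := hΩb.subset_ball 0
  set R : ℝ := max r 1 with hRdef
  have hR1 : (1:ℝ) ≤ R := le_max_right _ _
  have hR0 : (0:ℝ) < R := lt_of_lt_of_le one_pos hR1
  have hΩR : Ω ⊆ Metric.ball 0 R := hr.trans (Metric.ball_subset_ball (le_max_left _ _))
  set c : EuclideanSpace ℝ (Fin N) := (2*R) • EuclideanSpace.single ⟨0, hN⟩ (1:ℝ) with hc
  have hcnorm : ‖c‖ = 2*R := by
    rw [hc, norm_smul, EuclideanSpace.norm_single, norm_one, mul_one, Real.norm_eq_abs,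
      abs_of_pos (by linarith : (0:ℝ) < 2*R)]
  set A : Set (EuclideanSpace ℝ (Fin N)) := Metric.closedBall c (R/2) with hA
  have hAnorm : ∀ y ∈ A, R < ‖y‖ ∧ ‖y‖ ≤ 3*R := by
    intro y hy
    rw [hA, Metric.mem_closedBall, dist_eq_norm] at hy
    have h1 : |‖y‖ - ‖c‖| ≤ ‖y - c‖ := abs_norm_sub_norm_le y c
    rw [abs_le] at h1
    constructor <;> [linarith [h1.1, hcnorm]; linarith [h1.2, hcnorm]]
  -- exponent and constants
  set q : ℝ := (N:ℝ) + p * s with hq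
  have hq0 : 0 < q := by
    have : (0:ℝ) < p * s := mul_pos (by linarith) hs.1
    have hN' : (1:ℝ) ≤ (N:ℝ) := by exact_mod_cast hN
    simp only [hq]; linarith
  set D : ℝ := (4*R) ^ q with hD
  have hD0 : 0 < D := Real.rpow_pos_of_pos (by linarith) q
  set vA := volume A with hvA
  have hvA0 : 0 < vA := Metric.measure_closedBall_pos volume c (by positivity)
  have hvAtop : vA ≠ ⊤ := measure_closedBall_lt_top.ne
  have hvAt0 : 0 < vA.toReal := ENNReal.toReal_pos hvA0.ne' hvAtop
  set M' : ℝ := max M 1 with hM'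
  have hM'1 : (1:ℝ) ≤ M' := le_max_right _ _
  have hM'0 : (0:ℝ) < M' := lt_of_lt_of_le one_pos hM'1
  refine ⟨vA.toReal / (D * M'), by positivity, ?_⟩
  intro u hu hu0
  set lam : ℝ := vA.toReal / (D * M') with hlam
  have hlam0 : 0 < lam := by positivity
  have hlamM : lam * M' = vA.toReal / D := by
    rw [hlam, div_mul_eq_mul_div, div_eq_div_iff (by positivity) (by positivity)]; ring
  -- a.e. on A, u vanishes
  have huA : ∀ᵐ y ∂(volume.restrict A), u y = 0 := by
    filter_upwards [ae_restrict_mem (measurableSet_closedBall), ae_restrict_of_ae hu0]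
      with y hyA hy0
    refine hy0 (fun hyΩ => ?_)
    have h1 := (hAnorm y hyA).1
    have h2 := mem_ball_zero_iff.mp (hΩR hyΩ)
    linarith
  -- key inner bound
  have key : ∀ x ∈ Ω, ENNReal.ofReal (|u x| ^ p / D) * vA ≤
      ∫⁻ y, ENNReal.ofReal (|u x - u y| ^ p / ‖x - y‖ ^ q) := by
    intro x hx
    have hxR : ‖x‖ < R := mem_ball_zero_iff.mp (hΩR hx)
    calc ENNReal.ofReal (|u x| ^ p / D) * vA
        = ∫⁻ _ in A, ENNReal.ofReal (|u x| ^ p / D) := (setLIntegral_const _ _).symm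
      _ ≤ ∫⁻ y in A, ENNReal.ofReal (|u x - u y| ^ p / ‖x - y‖ ^ q) := by
          refine lintegral_mono_ae ?_
          filter_upwards [huA, ae_restrict_mem measurableSet_closedBall] with y hy0 hyA
          apply ENNReal.ofReal_le_ofReal
          obtain ⟨hy1, hy2⟩ := hAnorm y hyA
          have hxy0 : 0 < ‖x - y‖ := by
            rw [norm_pos_iff, sub_ne_zero]
            intro h; rw [h] at hxR; linarith
          have hxy4 : ‖x - y‖ ≤ 4*R := by
            have := norm_sub_le x y
            linarith
          have hpow : ‖x - y‖ ^ q ≤ D := by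
            rw [hD]
            exact Real.rpow_le_rpow (norm_nonneg _) (by linarith) hq0.le
          have hpow0 : 0 < ‖x - y‖ ^ q := Real.rpow_pos_of_pos hxy0 q
          rw [hy0, sub_zero]
          exact div_le_div_of_nonneg_left (Real.rpow_nonneg (abs_nonneg _) p) hpow0 hpow
      _ ≤ ∫⁻ y, ENNReal.ofReal (|u x - u y| ^ p / ‖x - y‖ ^ q) :=
          setLIntegral_le_lintegral _ _
  -- main chain
  calc ENNReal.ofReal lam * ∫⁻ x in Ω, ENNReal.ofReal (m x * |u x| ^ p)
      = ∫⁻ x in Ω, ENNReal.ofReal lam * ENNReal.ofReal (m x * |u x| ^ p) :=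
        (lintegral_const_mul' _ _ ENNReal.ofReal_ne_top).symm
    _ ≤ ∫⁻ x in Ω, ENNReal.ofReal (|u x| ^ p / D) * vA := by
        refine lintegral_mono_ae ?_
        filter_upwards [ae_restrict_mem hΩo.measurableSet] with x hx
        have ht0 : 0 ≤ |u x| ^ p := Real.rpow_nonneg (abs_nonneg _) p
        have h1 : lam * (m x * |u x| ^ p) ≤ |u x| ^ p / D * vA.toReal := by
          have h2 : lam * (m x * |u x| ^ p) ≤ lam * (M' * |u x| ^ p) := by
            have := hM x hx
            have := hm0 x hx
            nlinarith [mul_le_mul_of_nonneg_right (le_trans (hM x hx) (le_max_left M 1)) ht0]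
          calc lam * (m x * |u x| ^ p) ≤ lam * (M' * |u x| ^ p) := h2
            _ = (lam * M') * |u x| ^ p := by ring
            _ = |u x| ^ p / D * vA.toReal := by rw [hlamM]; ring
        calc ENNReal.ofReal lam * ENNReal.ofReal (m x * |u x| ^ p)
            = ENNReal.ofReal (lam * (m x * |u x| ^ p)) := (ENNReal.ofReal_mul hlam0.le).symm
          _ ≤ ENNReal.ofReal (|u x| ^ p / D * vA.toReal) := ENNReal.ofReal_le_ofReal h1
          _ = ENNReal.ofReal (|u x| ^ p / D) * ENNReal.ofReal vA.toReal :=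
              ENNReal.ofReal_mul (by positivity)
          _ = ENNReal.ofReal (|u x| ^ p / D) * vA := by rw [ENNReal.ofReal_toReal hvAtop]
    _ ≤ ∫⁻ x in Ω, ∫⁻ y, ENNReal.ofReal (|u x - u y| ^ p / ‖x - y‖ ^ q) := by
        refine lintegral_mono_ae ?_
        filter_upwards [ae_restrict_mem hΩo.measurableSet] with x hx
        exact key x hx
    _ ≤ ∫⁻ x, ∫⁻ y, ENNReal.ofReal (|u x - u y| ^ p / ‖x - y‖ ^ q) :=
        setLIntegral_le_lintegral _ _
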